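/- Let A be a cDFA over alphabet Σ with state set Q, start state q0 and transition function δ, let D₁,…,Dₙ ⊆ Σ be nonempty finite domains, and let D_N ⊆ ℕ be a nonempty finite domain. Fix i ∈ [1,n] and ℓ ∈ Dᵢ, and define Max(i,ℓ) = max over q ∈ Q with preMax(i−1,q) ≠ −∞ of preMax(i−1,q) + inc + sufMax(i+1,q′), where δ(q,ℓ) = (q′,inc). Then there exist a domain-consistent string σ with σᵢ = ℓ and a value v ∈ D_N with cost(q0,σ) ≥ v if and only if Max(i,ℓ) ≥ min(D_N). -/
import Mathlib


/-- A counter-DFA over state type `Q` and alphabet `σ`: a start state and a total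
transition function returning the successor state and the counter increment. -/
structure CDFA (Q : Type*) (σ : Type*) where
  q0 : Q
  δ : Q → σ → Q × ℕ

namespace CDFA

variable {Q σ : Type*}

/-- The state reached from `q` after consuming a string. -/
def run (A : CDFA Q σ) : Q → List σ → Q
  | q, [] => q
  | q, ℓ :: w => A.run (A.δ q ℓ).1 w

/-- The total counter increase from state `q` upon consuming a string. -/
def cost (A : CDFA Q σ) : Q → List σ → ℕ
  | _, [] => 0
  | q, ℓ :: w => (A.δ q ℓ).2 + A.cost (A.δ q ℓ).1 w

end CDFA

namespace CDFA

variable {Q σ : Type*}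

/-- `preMin A D i hi q` : the minimum cost (in `ℕ ∪ {∞}`) of a domain-consistent
prefix string of length `i` leading from the start state to state `q`
(`∞` if no such string reaches `q`). -/
noncomputable def preMin (A : CDFA Q σ) {n : ℕ} (D : Fin n → Finset σ)
    (i : ℕ) (hi : i ≤ n) (q : Q) : ℕ∞ :=
  sInf {c : ℕ∞ | ∃ s : Fin i → σ, (∀ j, s j ∈ D (Fin.castLE hi j)) ∧
    A.run A.q0 (List.ofFn s) = q ∧ (A.cost A.q0 (List.ofFn s) : ℕ∞) = c}

/-- `preMax A D i hi q` : the maximum cost (in `ℕ ∪ {−∞}`) of a domain-consistent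
prefix string of length `i` leading from the start state to state `q`
(`−∞` if no such string reaches `q`). -/
noncomputable def preMax (A : CDFA Q σ) {n : ℕ} (D : Fin n → Finset σ)
    (i : ℕ) (hi : i ≤ n) (q : Q) : WithBot ℕ :=
  sSup {c : WithBot ℕ | ∃ s : Fin i → σ, (∀ j, s j ∈ D (Fin.castLE hi j)) ∧
    A.run A.q0 (List.ofFn s) = q ∧ (A.cost A.q0 (List.ofFn s) : WithBot ℕ) = c}

/-- `sufMin A D i q` : the minimum cost of a domain-consistent suffix string for
positions `i, …, n−1` (0-based), starting from state `q`. -/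
noncomputable def sufMin (A : CDFA Q σ) {n : ℕ} (D : Fin n → Finset σ)
    (i : ℕ) (q : Q) : ℕ :=
  sInf {c : ℕ | ∃ s : Fin (n - i) → σ,
    (∀ j : Fin (n - i), s j ∈ D ⟨i + j.val, by have := j.isLt; omega⟩) ∧
    A.cost q (List.ofFn s) = c}

/-- `sufMax A D i q` : the maximum cost of a domain-consistent suffix string for
positions `i, …, n−1` (0-based), starting from state `q`. -/
noncomputable def sufMax (A : CDFA Q σ) {n : ℕ} (D : Fin n → Finset σ)
    (i : ℕ) (q : Q) : ℕ :=
  sSup {c : ℕ | ∃ s : Fin (n - i) → σ,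
    (∀ j : Fin (n - i), s j ∈ D ⟨i + j.val, by have := j.isLt; omega⟩) ∧
    A.cost q (List.ofFn s) = c}

end CDFA


namespace CDFA

variable {Q σ : Type*}

theorem run_append' (A : CDFA Q σ) (q : Q) (w1 w2 : List σ) :
    A.run q (w1 ++ w2) = A.run (A.run q w1) w2 := by
  induction w1 generalizing q with
  | nil => rfl
  | cons a w ih => simp only [List.cons_append, run]; exact ih _

theorem cost_append' (A : CDFA Q σ) (q : Q) (w1 w2 : List σ) :
    A.cost q (w1 ++ w2) = A.cost q w1 + A.cost (A.run q w1) w2 := by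
  induction w1 generalizing q with
  | nil => simp [cost, run]
  | cons a w ih =>
    show (A.δ q a).2 + A.cost (A.δ q a).1 (w ++ w2) =
      ((A.δ q a).2 + A.cost (A.δ q a).1 w) + A.cost (A.run (A.δ q a).1 w) w2
    rw [ih]; ring

end CDFA

theorem ofFn_split' {α : Type*} {n : ℕ} (s : Fin n → α) (i : Fin n) :
    List.ofFn s = List.ofFn (fun j : Fin i.val => s (Fin.castLE i.isLt.le j)) ++
      s i :: List.ofFn (fun j : Fin (n - (i.val + 1)) => s ⟨i.val + 1 + j.val, by omega⟩) := by
  have hi := i.isLt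
  apply List.ext_getElem
  · simp; omega
  · intro k h1 h2
    rw [List.getElem_ofFn]
    rcases lt_trichotomy k i.val with h | h | h
    · rw [List.getElem_append_left (by simpa using h), List.getElem_ofFn]
      congr 1
    · subst h
      rw [List.getElem_append_right (by simp)]
      simp
    · rw [List.getElem_append_right (by simp; omega), List.getElem_cons,
        dif_neg (by simp; omega)]
      rw [List.getElem_ofFn]
      congr 1
      exact Fin.ext (by simp; omega)

/-- Domain-consistency filtering for `cAutomatonAtLeast`: a value `ℓ ∈ Dᵢ` appears in
a solution iff `Max(i,ℓ)`, the maximum of `preMax(i−1,q) + inc + sufMax(i+1,q′)` over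
all states `q` with `preMax(i−1,q) ≠ −∞` (with `δ(q,ℓ) = (q′,inc)`), is at least
`min(D_N)` (positions 0-based). -/
theorem cAutomatonAtLeast_value_support {Q σ : Type*} [Fintype Q] [Fintype σ]
    [DecidableEq Q] (A : CDFA Q σ) {n : ℕ} (D : Fin n → Finset σ)
    (hD : ∀ j, (D j).Nonempty) (DN : Finset ℕ) (hDN : DN.Nonempty)
    (i : Fin n) (ℓ : σ) (hℓ : ℓ ∈ D i) :
    (∃ s : Fin n → σ, (∀ j, s j ∈ D j) ∧ s i = ℓ ∧
        ∃ v ∈ DN, v ≤ A.cost A.q0 (List.ofFn s)) ↔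
      ((DN.min' hDN : ℕ) : WithBot ℕ) ≤
        (Finset.univ.filter (fun q : Q => A.preMax D i.val i.isLt.le q ≠ ⊥)).sup
          (fun q => A.preMax D i.val i.isLt.le q + ((A.δ q ℓ).2 : WithBot ℕ) +
            (A.sufMax D (i.val + 1) (A.δ q ℓ).1 : WithBot ℕ)) := by
  classical
  set m := DN.min' hDN with hm
  set T : Q → Set ℕ := fun q => {c : ℕ | ∃ s : Fin i.val → σ,
    (∀ j, s j ∈ D (Fin.castLE i.isLt.le j)) ∧ A.run A.q0 (List.ofFn s) = q ∧
    A.cost A.q0 (List.ofFn s) = c} with hT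
  have hTfin : ∀ q, (T q).Finite := fun q =>
    Set.Finite.subset (Set.finite_range (fun s : Fin i.val → σ => A.cost A.q0 (List.ofFn s)))
      (by rintro c ⟨s, _, _, rfl⟩; exact ⟨s, rfl⟩)
  have hpre : ∀ q, A.preMax D i.val i.isLt.le q
      = sSup ((fun c : ℕ => (c : WithBot ℕ)) '' T q) := by
    intro q
    simp only [CDFA.preMax]
    congr 1
    ext c
    constructor
    · rintro ⟨s, h1, h2, h3⟩
      exact ⟨A.cost A.q0 (List.ofFn s), ⟨s, h1, h2, rfl⟩, h3⟩
    · rintro ⟨c', ⟨s, h1, h2, h3⟩, rfl⟩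
      exact ⟨s, h1, h2, by rw [h3]⟩
  set U : Q → Set ℕ := fun q' => {c : ℕ | ∃ s : Fin (n - (i.val + 1)) → σ,
    (∀ j : Fin (n - (i.val + 1)), s j ∈ D ⟨i.val + 1 + j.val, by have := j.isLt; omega⟩) ∧
    A.cost q' (List.ofFn s) = c} with hU
  have hUfin : ∀ q', (U q').Finite := fun q' =>
    Set.Finite.subset
      (Set.finite_range (fun s : Fin (n - (i.val + 1)) → σ => A.cost q' (List.ofFn s)))
      (by rintro c ⟨s, _, rfl⟩; exact ⟨s, rfl⟩)
  have hUne : ∀ q', (U q').Nonempty := by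
    intro q'
    refine ⟨_, ⟨fun j => (hD ⟨i.val + 1 + j.val, by have := j.isLt; omega⟩).choose,
      fun j => (hD _).choose_spec, rfl⟩⟩
  have hsuf : ∀ q', A.sufMax D (i.val + 1) q' = sSup (U q') := fun _ => rfl
  have hUmem : ∀ q', A.sufMax D (i.val + 1) q' ∈ U q' := fun q' => by
    rw [hsuf]; exact (hUne q').csSup_mem (hUfin q')
  have hUle : ∀ q' c, c ∈ U q' → c ≤ A.sufMax D (i.val + 1) q' := fun q' c hc => by
    rw [hsuf]; exact le_csSup (hUfin q').bddAbove hc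
  constructor
  · rintro ⟨s, hs, hsi, v, hv, hvle⟩
    set s1 : Fin i.val → σ := fun j => s (Fin.castLE i.isLt.le j) with hs1
    set s2 : Fin (n - (i.val + 1)) → σ := fun j => s ⟨i.val + 1 + j.val, by omega⟩ with hs2
    have hsplit := ofFn_split' s i
    set q := A.run A.q0 (List.ofFn s1) with hq
    have hc : A.cost A.q0 (List.ofFn s) =
        A.cost A.q0 (List.ofFn s1) + ((A.δ q ℓ).2 + A.cost (A.δ q ℓ).1 (List.ofFn s2)) := by
      rw [hsplit, A.cost_append']
      congr 1
      rw [hsi]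
      rfl
    have hT1 : A.cost A.q0 (List.ofFn s1) ∈ T q := ⟨s1, fun j => hs _, rfl, rfl⟩
    have hU1 : A.cost (A.δ q ℓ).1 (List.ofFn s2) ∈ U (A.δ q ℓ).1 := ⟨s2, fun j => hs _, rfl⟩
    have h1 : (↑(A.cost A.q0 (List.ofFn s1)) : WithBot ℕ) ≤ A.preMax D i.val i.isLt.le q := by
      rw [hpre q]
      exact le_csSup ((hTfin q).image _).bddAbove ⟨_, hT1, rfl⟩
    have hqmem : q ∈ Finset.univ.filter (fun q : Q => A.preMax D i.val i.isLt.le q ≠ ⊥) := by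
      simp only [Finset.mem_filter, Finset.mem_univ, true_and]
      intro hbot
      rw [hbot] at h1
      simp at h1
    refine le_trans ?_ (Finset.le_sup hqmem)
    have h2 : A.cost (A.δ q ℓ).1 (List.ofFn s2) ≤ A.sufMax D (i.val + 1) (A.δ q ℓ).1 :=
      hUle _ _ hU1
    calc (↑m : WithBot ℕ) ≤ ↑v := by exact_mod_cast DN.min'_le v hv
      _ ≤ ↑(A.cost A.q0 (List.ofFn s)) := by exact_mod_cast hvle
      _ = ↑(A.cost A.q0 (List.ofFn s1)) + ↑(A.δ q ℓ).2
          + ↑(A.cost (A.δ q ℓ).1 (List.ofFn s2)) := by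
        rw [hc]; push_cast; ring
      _ ≤ _ := by
        exact add_le_add (add_le_add h1 le_rfl) (by exact_mod_cast h2)
  · intro h
    have hbot : (⊥ : WithBot ℕ) < (↑m : WithBot ℕ) := WithBot.bot_lt_coe m
    obtain ⟨q, hqf, hq⟩ := (Finset.le_sup_iff hbot).mp h
    simp only [Finset.mem_filter, Finset.mem_univ, true_and] at hqf
    have hne : (T q).Nonempty := by
      by_contra hTe
      rw [Set.not_nonempty_iff_eq_empty] at hTe
      exact hqf (by rw [hpre q, hTe, Set.image_empty, WithBot.sSup_empty])
    have hpreq : A.preMax D i.val i.isLt.le q = ↑(sSup (T q)) := by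
      rw [hpre q]
      exact (WithBot.coe_sSup' hne (hTfin q).bddAbove).symm
    obtain ⟨s1, hs1d, hs1run, hs1cost⟩ := hne.csSup_mem (hTfin q)
    obtain ⟨s2, hs2d, hs2cost⟩ := hUmem (A.δ q ℓ).1
    set s : Fin n → σ := fun j => if h1 : j.val < i.val then s1 ⟨j.val, h1⟩
      else if h2 : j.val = i.val then ℓ
      else s2 ⟨j.val - (i.val + 1), by have := j.isLt; omega⟩ with hsdef
    have hsi : s i = ℓ := (dif_neg (lt_irrefl _)).trans (dif_pos rfl)
    refine ⟨s, ?_, hsi, m, DN.min'_mem hDN, ?_⟩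
    · intro j
      by_cases h1 : j.val < i.val
      · have hsj : s j = s1 ⟨j.val, h1⟩ := dif_pos h1
        have h2 := hs1d ⟨j.val, h1⟩
        rw [show (Fin.castLE i.isLt.le ⟨j.val, h1⟩) = j from Fin.ext rfl] at h2
        rw [hsj]; exact h2
      · by_cases h2 : j.val = i.val
        · have hji : j = i := Fin.ext h2
          have hsj : s j = ℓ := (dif_neg h1).trans (dif_pos h2)
          rw [hsj, hji]; exact hℓ
        · have h3 : i.val + 1 ≤ j.val := by omega
          have hsj : s j = s2 ⟨j.val - (i.val + 1), by have := j.isLt; omega⟩ :=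
            (dif_neg h1).trans (dif_neg h2)
          have h4 := hs2d ⟨j.val - (i.val + 1), by have := j.isLt; omega⟩
          rw [show (⟨i.val + 1 + (j.val - (i.val + 1)), by have := j.isLt; omega⟩ : Fin n) = j
            from Fin.ext (by simp; omega)] at h4
          rw [hsj]; exact h4
    · have hsplit := ofFn_split' s i
      have heq1 : (fun j : Fin i.val => s (Fin.castLE i.isLt.le j)) = s1 := by
        funext j
        exact dif_pos j.isLt
      have heq2 : (fun j : Fin (n - (i.val + 1)) =>
          s ⟨i.val + 1 + j.val, by have := j.isLt; omega⟩) = s2 := by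
        funext j
        have hc1 : ¬ (i.val + 1 + j.val < i.val) := by omega
        have hc2 : ¬ (i.val + 1 + j.val = i.val) := by omega
        have e1 : s ⟨i.val + 1 + j.val, by have := j.isLt; omega⟩ =
            s2 ⟨i.val + 1 + j.val - (i.val + 1), by have := j.isLt; omega⟩ :=
          (dif_neg hc1).trans (dif_neg hc2)
        rw [e1]
        exact congrArg s2 (Fin.ext (show i.val + 1 + j.val - (i.val + 1) = j.val by omega))
      have hcost : A.cost A.q0 (List.ofFn s)
          = sSup (T q) + ((A.δ q ℓ).2 + A.sufMax D (i.val + 1) (A.δ q ℓ).1) := by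
        rw [hsplit, heq1, hsi, heq2, A.cost_append', hs1run]
        have hstep : A.cost q (ℓ :: List.ofFn s2)
            = (A.δ q ℓ).2 + A.cost (A.δ q ℓ).1 (List.ofFn s2) := rfl
        rw [hstep, hs1cost, hs2cost]
      have hfinal : (↑m : WithBot ℕ)
          ≤ ↑(sSup (T q) + ((A.δ q ℓ).2 + A.sufMax D (i.val + 1) (A.δ q ℓ).1)) := by
        refine le_trans hq ?_
        rw [hpreq]
        push_cast
        rw [add_assoc]
      rw [hcost]
      exact_mod_cast hfinal
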